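/- Let D be an integral domain and ⋆ a semistar operation on D. The following are equivalent: (i) D is a ⋆-domain; (ii) ⋆ is a.b. and (E·F^{-1})^⋆ = (E^⋆ : F) for all F ∈ f(D) and E ∈ F̄(D); (iii) D is quasi-⋆-integrally closed and (E·F^{-1})^⋆ = (E^⋆ : F) for all F ∈ f(D) and E ∈ F̄(D). The analogous equivalences hold with 'P⋆MD' in place of '⋆-domain' and with (E·F^{-1})^{⋆_f} = (E^{⋆_f} : F) in place of (E·F^{-1})^⋆ = (E^⋆ : F). -/

import Mathlib

open Submodule

namespace Semistar

/-- A semistar operation on an integral domain `D` with quotient field `K`: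
a map on `D`-submodules of `K` satisfying the semistar axioms on nonzero submodules. -/
structure SemistarOp (D K : Type*) [CommRing D] [Field K] [Algebra D K] where
  star : Submodule D K → Submodule D K
  star_smul_mul : ∀ x : K, x ≠ 0 → ∀ E : Submodule D K, E ≠ ⊥ →
    star (span D {x} * E) = span D {x} * star E
  star_mono : ∀ E F : Submodule D K, E ≠ ⊥ → F ≠ ⊥ → E ≤ F → star E ≤ star F
  le_star : ∀ E : Submodule D K, E ≠ ⊥ → E ≤ star E
  star_star : ∀ E : Submodule D K, E ≠ ⊥ → star (star E) = star E

variable {D K : Type*} [CommRing D] [Field K] [Algebra D K]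

/-- The finite-type semistar operation `⋆_f` associated to `⋆`. -/
def finStar (t : Submodule D K → Submodule D K) : Submodule D K → Submodule D K :=
  fun E => ⨆ F ∈ {F : Submodule D K | F ≠ ⊥ ∧ F.FG ∧ F ≤ E}, t F

/-- The image in `K` of an ideal of `D`. -/
def idealToK (I : Ideal D) : Submodule D K :=
  Submodule.map (Algebra.linearMap D K) I

/-- `I` is a quasi-`⋆`-ideal: a nonzero ideal of `D` with `I^⋆ ∩ D = I`. -/
def IsQuasiIdeal (t : Submodule D K → Submodule D K) (I : Ideal D) : Prop :=
  I ≠ ⊥ ∧ t (idealToK I) ⊓ 1 = idealToK I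

/-- `M` is a quasi-`⋆`-maximal ideal: maximal among quasi-`⋆`-ideals. -/
def IsQuasiMaximal (t : Submodule D K → Submodule D K) (M : Ideal D) : Prop :=
  IsQuasiIdeal t M ∧ ∀ J : Ideal D, IsQuasiIdeal t J → M ≤ J → M = J

/-- The localization `E·D_M` of a submodule `E` of `K` at (the complement of) an ideal `M`. -/
def locAt (M : Ideal D) (E : Submodule D K) : Submodule D K where
  carrier := {x : K | ∃ s ∈ Submonoid.closure ((M : Set D)ᶜ), s • x ∈ E}
  add_mem' := by
    rintro x y ⟨s, hs, hsx⟩ ⟨t, ht, hty⟩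
    refine ⟨s * t, mul_mem hs ht, ?_⟩
    have h1 : (s * t) • x ∈ E := by rw [mul_comm, mul_smul]; exact E.smul_mem t hsx
    have h2 : (s * t) • y ∈ E := by rw [mul_smul]; exact E.smul_mem s hty
    rw [smul_add]; exact E.add_mem h1 h2
  zero_mem' := ⟨1, Submonoid.one_mem _, by simp⟩
  smul_mem' := by
    rintro c x ⟨s, hs, hsx⟩
    exact ⟨s, hs, by rw [smul_comm]; exact E.smul_mem c hsx⟩

/-- The spectral semistar operation `⋆̃` associated to `⋆`, defined by
`E^⋆̃ = ⋂ { E·D_M : M quasi-`⋆_f`-maximal }`. -/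
def tildeStar (s : SemistarOp D K) : Submodule D K → Submodule D K :=
  fun E => ⨅ M ∈ {M : Ideal D | IsQuasiMaximal (finStar s.star) M}, locAt M E

/-- The localizing system `F^⋆` of ideals `I` with `I^⋆ = D^⋆`. -/
def starLS (s : SemistarOp D K) : Set (Ideal D) :=
  {I : Ideal D | I ≠ ⊥ ∧ s.star (idealToK I) = s.star 1}

/-- The stable semistar operation `⋆̄` associated to `⋆`:
`E^⋆̄ = ⋃ {(E : J) : J ∈ F^⋆}`. -/
def barStar (s : SemistarOp D K) : Submodule D K → Submodule D K :=
  fun E => ⨆ J ∈ starLS s, E / idealToK J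

/-- `I` is `⋆`-invertible: `(I·I⁻¹)^⋆ = D^⋆`. -/
def IsStarInvertible (t : Submodule D K → Submodule D K) (I : Submodule D K) : Prop :=
  t (I * (1 / I)) = t 1

/-- `D` is a `⋆`-domain: every nonzero finitely generated `D`-submodule of `K`
is `⋆`-invertible. -/
def IsStarDomain (t : Submodule D K → Submodule D K) : Prop :=
  ∀ I : Submodule D K, I ≠ ⊥ → I.FG → IsStarInvertible t I

/-- `D` is a Prüfer `⋆`-multiplication domain: every nonzero finitely generated
ideal of `D` is `⋆_f`-invertible. -/
def IsPMD (t : Submodule D K → Submodule D K) : Prop :=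
  ∀ I : Submodule D K, I ≠ ⊥ → I.FG → I ≤ 1 → IsStarInvertible (finStar t) I

/-- `D` is a P⋆MD for the semistar operation `s`. -/
abbrev IsPStarMD (s : SemistarOp D K) : Prop := IsPMD s.star

/-- Equality of two semistar operations (as maps on nonzero submodules):
`D` is a `(∗₁, ∗₂)`-domain. -/
def StarEq (t₁ t₂ : Submodule D K → Submodule D K) : Prop :=
  ∀ E : Submodule D K, E ≠ ⊥ → t₁ E = t₂ E

/-- `⋆` is a.b. -/
def IsAB (t : Submodule D K → Submodule D K) : Prop :=
  ∀ E : Submodule D K, E ≠ ⊥ → E.FG → ∀ F G : Submodule D K, F ≠ ⊥ → G ≠ ⊥ →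
    t (E * F) ≤ t (E * G) → t F ≤ t G

/-- `⋆` is e.a.b. -/
def IsEAB (t : Submodule D K → Submodule D K) : Prop :=
  ∀ E F G : Submodule D K, E ≠ ⊥ → E.FG → F ≠ ⊥ → F.FG → G ≠ ⊥ → G.FG →
    t (E * F) ≤ t (E * G) → t F ≤ t G

/-- `D` is quasi-`⋆`-integrally closed: `D^⋆ = ⋃ {(F^⋆ : F^⋆) : F ∈ f(D)}`. -/
def IsQuasiStarIntegrallyClosed (t : Submodule D K → Submodule D K) : Prop :=
  (t 1 : Set K) = ⋃ F ∈ {F : Submodule D K | F ≠ ⊥ ∧ F.FG}, ((t F / t F : Submodule D K) : Set K)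

/-- The submodule `S` of `K` is integrally closed in `K`. -/
def IsIntegrallyClosedIn (S : Submodule D K) : Prop :=
  ∀ x : K, (∃ p : Polynomial K, p.Monic ∧ (∀ i, p.coeff i ∈ S) ∧ Polynomial.eval x p = 0) → x ∈ S

/-- `D` is `⋆`-Noetherian: ACC on quasi-`⋆`-ideals. -/
def IsStarNoetherian (t : Submodule D K → Submodule D K) : Prop :=
  ∀ c : ℕ → Ideal D, (∀ n, IsQuasiIdeal t (c n)) → Monotone c →
    ∃ n, ∀ m, n ≤ m → c m = c n

/-- `D` is `⋆`-extracoherent. -/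
def IsExtraCoherent (t : Submodule D K → Submodule D K) : Prop :=
  ∀ E F : Submodule D K, E ≠ ⊥ → E.FG → F ≠ ⊥ → F.FG → E ⊓ F ≠ ⊥ →
    ∃ J : Submodule D K, J ≠ ⊥ ∧ J.FG ∧ J ≤ E ⊓ F ∧ t J = t E ⊓ t F

/-- `D` is truly `⋆`-coherent. -/
def IsTrulyCoherent (t : Submodule D K → Submodule D K) : Prop :=
  ∀ E F : Submodule D K, E ≠ ⊥ → E.FG → F ≠ ⊥ → F.FG → E ⊓ F ≠ ⊥ →
    ∃ J : Submodule D K, J ≠ ⊥ ∧ J.FG ∧ t J = t (E ⊓ F)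

/-- `D` is `⋆`-coherent. -/
def IsCoherent (t : Submodule D K → Submodule D K) : Prop :=
  ∀ E F : Submodule D K, E ≠ ⊥ → E.FG → F ≠ ⊥ → F.FG → E ⊓ F ≠ ⊥ →
    ∃ J : Submodule D K, J ≠ ⊥ ∧ J.FG ∧ t J = t E ⊓ t F

/-- `D` is `⋆`-quasi-coherent. -/
def IsQuasiCoherent (t : Submodule D K → Submodule D K) : Prop :=
  ∀ F : Submodule D K, F ≠ ⊥ → F.FG →
    ∃ G : Submodule D K, G ≠ ⊥ ∧ G.FG ∧ t ((1 : Submodule D K) / F) = t G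

/-- `D` is an `H(⋆)`-domain. -/
def IsHDomain (t : Submodule D K → Submodule D K) : Prop :=
  ∀ I : Ideal D, I ≠ ⊥ → t (idealToK I) = t 1 →
    ∃ J : Ideal D, J ≠ ⊥ ∧ J.FG ∧ J ≤ I ∧ t (idealToK J) = t 1

/-- `D` is an `I(⋆)`-domain. -/
def IsIDomain (s : SemistarOp D K) : Prop :=
  ∀ I : Submodule D K, I ≠ ⊥ → I.FG → I ≤ 1 →
    (IsStarInvertible s.star I ↔ IsStarInvertible (finStar s.star) I)


section Aux

theorem span_singleton_ne_bot {x : K} (hx : x ≠ 0) : (span D {x} : Submodule D K) ≠ ⊥ :=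
  (Submodule.ne_bot_iff _).mpr ⟨x, Submodule.mem_span_singleton_self x, hx⟩

theorem mul_ne_bot {A B : Submodule D K} (hA : A ≠ ⊥) (hB : B ≠ ⊥) : A * B ≠ ⊥ := by
  obtain ⟨a, haA, ha⟩ := (Submodule.ne_bot_iff A).mp hA
  obtain ⟨b, hbB, hb⟩ := (Submodule.ne_bot_iff B).mp hB
  exact (Submodule.ne_bot_iff _).mpr ⟨a * b, Submodule.mul_mem_mul haA hbB, mul_ne_zero ha hb⟩

theorem one_mem_one' : (1 : K) ∈ (1 : Submodule D K) :=
  Submodule.one_eq_span (R := D) (A := K) ▸ Submodule.mem_span_singleton_self 1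

theorem one_ne_bot : (1 : Submodule D K) ≠ ⊥ :=
  (Submodule.ne_bot_iff _).mpr ⟨1, one_mem_one', one_ne_zero⟩

theorem one_fg : (1 : Submodule D K).FG :=
  Submodule.one_eq_span (R := D) (A := K) ▸ Submodule.fg_span_singleton 1

theorem star_ne_bot (s : SemistarOp D K) {E : Submodule D K} (hE : E ≠ ⊥) : s.star E ≠ ⊥ :=
  fun h => hE (le_bot_iff.mp (h ▸ s.le_star E hE))

theorem span_singleton_mul_le {x : K} {M N : Submodule D K} (h : ∀ y ∈ M, x * y ∈ N) :
    span D {x} * M ≤ N := by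
  rw [Submodule.mul_le]
  intro m hm n hn
  obtain ⟨d, rfl⟩ := Submodule.mem_span_singleton.mp hm
  rw [smul_mul_assoc]
  exact N.smul_mem d (h n hn)

theorem span_mul_span_inv {x : K} (hx : x ≠ 0) :
    span D {x} * span D {x⁻¹} = (1 : Submodule D K) := by
  rw [Submodule.span_mul_span, Set.singleton_mul_singleton, mul_inv_cancel₀ hx,
    Submodule.one_eq_span]

theorem span_mul_inv_span_mul {x : K} (hx : x ≠ 0) (M : Submodule D K) :
    span D {x} * (span D {x⁻¹} * M) = M := by
  rw [← mul_assoc, span_mul_span_inv hx, one_mul]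

theorem inv_span_mul_span_mul {x : K} (hx : x ≠ 0) (M : Submodule D K) :
    span D {x⁻¹} * (span D {x} * M) = M := by
  have := span_mul_inv_span_mul (inv_ne_zero hx) M
  rwa [inv_inv] at this

theorem div_mul_le' (A B : Submodule D K) : A / B * B ≤ A :=
  Submodule.le_div_iff_mul_le.mp (le_refl (A / B))

theorem mul_one_div_le_one' (I : Submodule D K) : I * (1 / I) ≤ 1 := by
  rw [mul_comm]; exact div_mul_le' 1 I

/-- Basic: `(E^⋆)·F ≤ (E·F)^⋆`. -/
theorem star_mul_le (s : SemistarOp D K) {A B : Submodule D K} (hA : A ≠ ⊥) (hB : B ≠ ⊥) :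
    s.star A * B ≤ s.star (A * B) := by
  rw [Submodule.mul_le]
  intro a ha b hb
  rcases eq_or_ne b 0 with rfl | hb0
  · simpa using (s.star (A * B)).zero_mem
  · have h1 : b * a ∈ span D {b} * s.star A :=
      Submodule.mul_mem_mul (Submodule.mem_span_singleton_self b) ha
    rw [← s.star_smul_mul b hb0 A hA] at h1
    have h2 : span D {b} * A ≤ A * B := by
      rw [mul_comm A B]
      exact mul_le_mul_left (Submodule.span_le.mpr (Set.singleton_subset_iff.mpr hb)) _
    have h3 := s.star_mono _ _ (mul_ne_bot (span_singleton_ne_bot hb0) hA)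
      (mul_ne_bot hA hB) h2
    rw [mul_comm a b]
    exact h3 h1

theorem star_star_mul (s : SemistarOp D K) {A B : Submodule D K} (hA : A ≠ ⊥) (hB : B ≠ ⊥) :
    s.star (s.star A * B) = s.star (A * B) := by
  apply le_antisymm
  · have h := s.star_mono _ _ (mul_ne_bot (star_ne_bot s hA) hB)
      (star_ne_bot s (mul_ne_bot hA hB)) (star_mul_le s hA hB)
    rwa [s.star_star _ (mul_ne_bot hA hB)] at h
  · exact s.star_mono _ _ (mul_ne_bot hA hB) (mul_ne_bot (star_ne_bot s hA) hB)
      (mul_le_mul_left (s.le_star A hA) _)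

end Aux
section Aux2

theorem one_div_ne_bot [IsDomain D] [IsFractionRing D K] {F : Submodule D K} (hF : F.FG) :
    (1 / F : Submodule D K) ≠ ⊥ := by
  obtain ⟨S, hS⟩ := hF
  obtain ⟨b, hb⟩ := IsLocalization.exist_integer_multiples_of_finset (nonZeroDivisors D) S
  set c := algebraMap D K (b : D) with hc
  have hc0 : c ≠ 0 := by
    rw [hc, map_ne_zero_iff _ (IsFractionRing.injective D K)]
    exact nonZeroDivisors.coe_ne_zero b
  refine (Submodule.ne_bot_iff _).mpr ⟨c, ?_, hc0⟩
  rw [Submodule.mem_div_iff_forall_mul_mem]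
  intro y hy
  have hle : span D {c} * F ≤ 1 := by
    rw [← hS]
    apply span_singleton_mul_le
    intro z hz
    refine Submodule.span_induction ?_ (by simp) ?_ ?_ hz
    · intro a ha
      obtain ⟨d, hd⟩ := hb a ha
      rw [Submodule.mem_one]
      exact ⟨d, by rw [hd, Algebra.smul_def, hc]⟩
    · intro a a' _ _ h1 h2
      rw [mul_add]; exact add_mem h1 h2
    · intro d a _ h1
      rw [mul_smul_comm]; exact Submodule.smul_mem _ d h1
  exact hle (Submodule.mul_mem_mul (Submodule.mem_span_singleton_self c) hy)

theorem one_div_span_mul {x : K} (hx : x ≠ 0) (I : Submodule D K) :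
    (1 : Submodule D K) / (span D {x} * I) = span D {x⁻¹} * (1 / I) := by
  apply le_antisymm
  · have h : span D {x} * ((1 : Submodule D K) / (span D {x} * I)) ≤ 1 / I := by
      rw [Submodule.le_div_iff_mul_le]
      calc span D {x} * ((1 : Submodule D K) / (span D {x} * I)) * I
          = (1 : Submodule D K) / (span D {x} * I) * (span D {x} * I) := by ring
        _ ≤ 1 := div_mul_le' 1 _
    calc (1 : Submodule D K) / (span D {x} * I)
        = span D {x⁻¹} * (span D {x} * ((1 : Submodule D K) / (span D {x} * I))) :=
          (inv_span_mul_span_mul hx _).symm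
      _ ≤ span D {x⁻¹} * (1 / I) := mul_le_mul_right h _
  · rw [Submodule.le_div_iff_mul_le]
    calc span D {x⁻¹} * (1 / I) * (span D {x} * I)
        = span D {x} * span D {x⁻¹} * (1 / I * I) := by ring
      _ = 1 / I * I := by rw [span_mul_span_inv hx, one_mul]
      _ ≤ 1 := div_mul_le' 1 I

theorem smul_mul_one_div {x : K} (hx : x ≠ 0) (I : Submodule D K) :
    span D {x} * I * (1 / (span D {x} * I)) = I * (1 / I) := by
  rw [one_div_span_mul hx I]
  calc span D {x} * I * (span D {x⁻¹} * (1 / I))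
      = span D {x} * span D {x⁻¹} * (I * (1 / I)) := by ring
    _ = I * (1 / I) := by rw [span_mul_span_inv hx, one_mul]

theorem star_le_finStar (s : SemistarOp D K) {G E : Submodule D K} (hG : G ≠ ⊥) (hGfg : G.FG)
    (hGE : G ≤ E) : s.star G ≤ finStar s.star E :=
  le_iSup₂_of_le G ⟨hG, hGfg, hGE⟩ le_rfl

theorem finStar_le (s : SemistarOp D K) {E : Submodule D K} (hE : E ≠ ⊥) :
    E ≤ finStar s.star E := by
  intro x hx
  rcases eq_or_ne x 0 with rfl | hx0
  · exact zero_mem _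
  · exact star_le_finStar s (span_singleton_ne_bot hx0) (Submodule.fg_span_singleton x)
      (Submodule.span_le.mpr (Set.singleton_subset_iff.mpr hx))
      (s.le_star _ (span_singleton_ne_bot hx0) (Submodule.mem_span_singleton_self x))

theorem finStar_ne_bot (s : SemistarOp D K) {E : Submodule D K} (hE : E ≠ ⊥) :
    finStar s.star E ≠ ⊥ :=
  fun h => hE (le_bot_iff.mp (h ▸ finStar_le s hE))

theorem finStar_le_star (s : SemistarOp D K) {E : Submodule D K} (hE : E ≠ ⊥) :
    finStar s.star E ≤ s.star E :=
  iSup₂_le fun _ hF => s.star_mono _ _ hF.1 hE hF.2.2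

theorem finStar_mono (s : SemistarOp D K) {E E' : Submodule D K} (h : E ≤ E') :
    finStar s.star E ≤ finStar s.star E' :=
  iSup₂_le fun _ hF => star_le_finStar s hF.1 hF.2.1 (hF.2.2.trans h)

theorem finStar_eq_of_fg (s : SemistarOp D K) {E : Submodule D K} (hE : E ≠ ⊥) (hEfg : E.FG) :
    finStar s.star E = s.star E :=
  le_antisymm (finStar_le_star s hE) (star_le_finStar s hE hEfg le_rfl)

theorem le_finStar_exists (s : SemistarOp D K) {E F : Submodule D K} (hE : E ≠ ⊥) (hFfg : F.FG)
    (h : F ≤ finStar s.star E) : ∃ G, G ≠ ⊥ ∧ G.FG ∧ G ≤ E ∧ F ≤ s.star G := by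
  have hcomp := (Submodule.fg_iff_compact F).mp hFfg
  rw [CompleteLattice.isCompactElement_iff_le_of_directed_sSup_le] at hcomp
  obtain ⟨y, hy, hy0⟩ := (Submodule.ne_bot_iff E).mp hE
  set T : Set (Submodule D K) := {G | G ≠ ⊥ ∧ G.FG ∧ G ≤ E} with hT
  have hne : (s.star '' T).Nonempty :=
    ⟨_, ⟨span D {y}, ⟨span_singleton_ne_bot hy0, Submodule.fg_span_singleton y,
      Submodule.span_le.mpr (Set.singleton_subset_iff.mpr hy)⟩, rfl⟩⟩
  have hdir : DirectedOn (· ≤ ·) (s.star '' T) := by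
    rintro _ ⟨G1, hG1, rfl⟩ _ ⟨G2, hG2, rfl⟩
    have hsup : G1 ⊔ G2 ∈ T :=
      ⟨fun hb => hG1.1 (le_bot_iff.mp (hb ▸ (le_sup_left : G1 ≤ G1 ⊔ G2))),
        hG1.2.1.sup hG2.2.1, sup_le hG1.2.2 hG2.2.2⟩
    exact ⟨s.star (G1 ⊔ G2), ⟨G1 ⊔ G2, hsup, rfl⟩,
      s.star_mono _ _ hG1.1 hsup.1 le_sup_left, s.star_mono _ _ hG2.1 hsup.1 le_sup_right⟩
  have hsup : F ≤ sSup (s.star '' T) := by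
    rwa [sSup_image]
  obtain ⟨_, ⟨G, hG, rfl⟩, hle⟩ := hcomp _ hne hdir hsup
  exact ⟨G, hG.1, hG.2.1, hG.2.2, hle⟩

theorem finStar_finStar (s : SemistarOp D K) {E : Submodule D K} (hE : E ≠ ⊥) :
    finStar s.star (finStar s.star E) = finStar s.star E := by
  apply le_antisymm
  · refine iSup₂_le fun F hF => ?_
    obtain ⟨G, hG0, hGfg, hGE, hFG⟩ := le_finStar_exists s hE hF.2.1 hF.2.2
    have h1 : s.star F ≤ s.star G := by
      have := s.star_mono _ _ hF.1 (star_ne_bot s hG0) hFG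
      rwa [s.star_star G hG0] at this
    exact h1.trans (star_le_finStar s hG0 hGfg hGE)
  · exact finStar_mono s (finStar_le s hE)

theorem finStar_smul_le (s : SemistarOp D K) {x : K} (hx : x ≠ 0) {E : Submodule D K}
    (hE : E ≠ ⊥) : finStar s.star (span D {x} * E) ≤ span D {x} * finStar s.star E := by
  refine iSup₂_le fun F hF => ?_
  set G := span D {x⁻¹} * F with hG
  have hGF : span D {x} * G = F := span_mul_inv_span_mul hx F
  have hG0 : G ≠ ⊥ := mul_ne_bot (span_singleton_ne_bot (inv_ne_zero hx)) hF.1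
  have hGE : G ≤ E := by
    have := mul_le_mul_right hF.2.2 (span D {x⁻¹})
    rwa [inv_span_mul_span_mul hx E] at this
  have h1 : s.star F = span D {x} * s.star G := by
    rw [← hGF, s.star_smul_mul x hx G hG0]
  rw [h1]
  exact mul_le_mul_right
    (star_le_finStar s hG0 ((Submodule.fg_span_singleton _).mul hF.2.1) hGE) _

theorem finStar_smul (s : SemistarOp D K) {x : K} (hx : x ≠ 0) {E : Submodule D K}
    (hE : E ≠ ⊥) : finStar s.star (span D {x} * E) = span D {x} * finStar s.star E := by
  apply le_antisymm (finStar_smul_le s hx hE)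
  have h := finStar_smul_le s (inv_ne_zero hx) (mul_ne_bot (span_singleton_ne_bot hx) hE)
  rw [inv_span_mul_span_mul hx E] at h
  calc span D {x} * finStar s.star E
      ≤ span D {x} * (span D {x⁻¹} * finStar s.star (span D {x} * E)) :=
        mul_le_mul_right h _
    _ = finStar s.star (span D {x} * E) := span_mul_inv_span_mul hx _

/-- The finite-type operation as a `SemistarOp`. -/
def SemistarOp.fin (s : SemistarOp D K) : SemistarOp D K where
  star := finStar s.star
  star_smul_mul := fun _ hx _ hE => finStar_smul s hx hE
  star_mono := fun _ _ _ _ h => finStar_mono s h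
  le_star := fun _ hE => finStar_le s hE
  star_star := fun _ hE => finStar_finStar s hE

theorem star_finStar (s : SemistarOp D K) {X : Submodule D K} (hX : X ≠ ⊥) :
    s.star (finStar s.star X) = s.star X := by
  apply le_antisymm
  · have h := s.star_mono _ _ (finStar_ne_bot s hX) (star_ne_bot s hX) (finStar_le_star s hX)
    rwa [s.star_star X hX] at h
  · exact s.star_mono _ _ hX (finStar_ne_bot s hX) (finStar_le s hX)

end Aux2
section Main

variable [IsDomain D] [IsFractionRing D K]

/-- If `D` is a `⋆`-domain then `(E·F⁻¹)^⋆ = (E^⋆ : F)` for `F ∈ f(D)`, `E ∈ F̄(D)`. -/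
theorem starDomain_formula (s : SemistarOp D K) (h : IsStarDomain s.star) :
    ∀ F : Submodule D K, F ≠ ⊥ → F.FG → ∀ E : Submodule D K, E ≠ ⊥ →
      s.star (E * (1 / F)) = s.star E / F := by
  intro F hF hFfg E hE
  have h1F : (1 / F : Submodule D K) ≠ ⊥ := one_div_ne_bot hFfg
  apply le_antisymm
  · intro x hx
    rw [Submodule.mem_div_iff_forall_mul_mem]
    intro y hy
    have h1 : x * y ∈ s.star (E * (1 / F)) * F := Submodule.mul_mem_mul hx hy
    have h2 : s.star (E * (1 / F)) * F ≤ s.star (E * (1 / F) * F) :=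
      star_mul_le s (mul_ne_bot hE h1F) hF
    have h3 : E * (1 / F) * F ≤ E := by
      calc E * (1 / F) * F = E * (1 / F * F) := mul_assoc _ _ _
        _ ≤ E * 1 := mul_le_mul_right (div_mul_le' 1 F) _
        _ = E := mul_one E
    exact s.star_mono _ _ (mul_ne_bot (mul_ne_bot hE h1F) hF) hE h3 (h2 h1)
  · intro x hx
    rcases eq_or_ne x 0 with rfl | hx0
    · exact zero_mem _
    rw [Submodule.mem_div_iff_forall_mul_mem] at hx
    have hxF : span D {x} * F ≤ s.star E := span_singleton_mul_le hx
    have hFF : s.star (F * (1 / F)) = s.star 1 := h F hF hFfg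
    have key : x ∈ span D {x} * s.star (F * (1 / F)) := by
      rw [hFF]
      have h1 : (1 : K) ∈ s.star 1 := s.le_star 1 one_ne_bot one_mem_one'
      simpa using Submodule.mul_mem_mul (Submodule.mem_span_singleton_self x) h1
    rw [← s.star_smul_mul x hx0 _ (mul_ne_bot hF h1F)] at key
    have h5 : span D {x} * (F * (1 / F)) ≤ s.star E * (1 / F) := by
      rw [← mul_assoc]
      exact mul_le_mul_left hxF _
    have h6 := s.star_mono _ _
      (mul_ne_bot (span_singleton_ne_bot hx0) (mul_ne_bot hF h1F))
      (mul_ne_bot (star_ne_bot s hE) h1F) h5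
    rw [star_star_mul s hE h1F] at h6
    exact h6 key

/-- If every nonzero f.g. submodule is `⋆`-invertible then `⋆` is a.b. -/
theorem ab_of_inv (s : SemistarOp D K)
    (hinv : ∀ E : Submodule D K, E ≠ ⊥ → E.FG → s.star (E * (1 / E)) = s.star 1) :
    IsAB s.star := by
  intro E hE hEfg F G hF hG hle
  have h1E : (1 / E : Submodule D K) ≠ ⊥ := one_div_ne_bot hEfg
  have key : ∀ H : Submodule D K, H ≠ ⊥ → s.star (1 / E * s.star (E * H)) = s.star H := by
    intro H hH
    have hEH : E * H ≠ ⊥ := mul_ne_bot hE hH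
    calc s.star (1 / E * s.star (E * H)) = s.star (s.star (E * H) * (1 / E)) := by
          rw [mul_comm]
      _ = s.star (E * H * (1 / E)) := star_star_mul s hEH h1E
      _ = s.star (E * (1 / E) * H) := by ring_nf
      _ = s.star (s.star (E * (1 / E)) * H) := (star_star_mul s (mul_ne_bot hE h1E) hH).symm
      _ = s.star (s.star 1 * H) := by rw [hinv E hE hEfg]
      _ = s.star (1 * H) := star_star_mul s one_ne_bot hH
      _ = s.star H := by rw [one_mul]
  have hmul : 1 / E * s.star (E * F) ≤ 1 / E * s.star (E * G) :=
    mul_le_mul_right hle _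
  have h2 := s.star_mono _ _
    (mul_ne_bot h1E (star_ne_bot s (mul_ne_bot hE hF)))
    (mul_ne_bot h1E (star_ne_bot s (mul_ne_bot hE hG))) hmul
  rwa [key F hF, key G hG] at h2

set_option maxHeartbeats 1000000 in
/-- a.b. implies quasi-`⋆`-integrally closed. -/
theorem qic_of_ab (s : SemistarOp D K) (h : IsAB s.star) :
    IsQuasiStarIntegrallyClosed s.star := by
  apply Set.Subset.antisymm
  · intro x hx
    rw [Set.mem_iUnion₂]
    refine ⟨1, ⟨one_ne_bot, one_fg⟩, ?_⟩
    rw [SetLike.mem_coe, Submodule.mem_div_iff_forall_mul_mem]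
    intro y hy
    have h1 : x * y ∈ s.star 1 * s.star 1 := Submodule.mul_mem_mul hx hy
    have h2 : s.star 1 * s.star 1 ≤ s.star (1 * s.star 1) :=
      star_mul_le s one_ne_bot (star_ne_bot s one_ne_bot)
    rw [one_mul, s.star_star 1 one_ne_bot] at h2
    exact h2 h1
  · intro x hx
    rw [Set.mem_iUnion₂] at hx
    obtain ⟨F, ⟨hF0, hFfg⟩, hxF⟩ := hx
    rcases eq_or_ne x 0 with rfl | hx0
    · exact zero_mem _
    rw [SetLike.mem_coe, Submodule.mem_div_iff_forall_mul_mem] at hxF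
    have h1 : s.star (F * span D {x}) ≤ s.star (F * 1) := by
      rw [mul_one, mul_comm, s.star_smul_mul x hx0 F hF0]
      exact span_singleton_mul_le hxF
    have h2 := h F hF0 hFfg (span D {x}) 1 (span_singleton_ne_bot hx0) one_ne_bot h1
    exact h2 (s.le_star _ (span_singleton_ne_bot hx0) (Submodule.mem_span_singleton_self x))

/-- The formula `(E·F⁻¹)^⋆ = (E^⋆ : F)` implies that `D` is a `⋆`-domain. -/
theorem starDomain_of_formula (s : SemistarOp D K)
    (h : ∀ F : Submodule D K, F ≠ ⊥ → F.FG → ∀ E : Submodule D K, E ≠ ⊥ →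
      s.star (E * (1 / F)) = s.star E / F) :
    IsStarDomain s.star := by
  intro I hI hIfg
  have h1I : (1 / I : Submodule D K) ≠ ⊥ := one_div_ne_bot hIfg
  apply le_antisymm
  · exact s.star_mono _ _ (mul_ne_bot hI h1I) one_ne_bot (mul_one_div_le_one' I)
  · rw [h I hI hIfg I hI]
    intro x hx
    rw [Submodule.mem_div_iff_forall_mul_mem]
    intro y hy
    have h1 : x * y ∈ s.star 1 * I := Submodule.mul_mem_mul hx hy
    have h2 : s.star 1 * I ≤ s.star (1 * I) := star_mul_le s one_ne_bot hI
    rw [one_mul] at h2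
    exact h2 h1

theorem pmd_iff_finStarDomain (s : SemistarOp D K) :
    IsPMD s.star ↔ IsStarDomain (finStar s.star) := by
  constructor
  · intro h I hI hIfg
    obtain ⟨c, hcmem, hc0⟩ := (Submodule.ne_bot_iff _).mp (one_div_ne_bot (F := I) hIfg)
    have hle : span D {c} * I ≤ 1 :=
      Submodule.le_div_iff_mul_le.mp
        (Submodule.span_le.mpr (Set.singleton_subset_iff.mpr hcmem))
    have hJ0 : span D {c} * I ≠ ⊥ := mul_ne_bot (span_singleton_ne_bot hc0) hI
    have hJfg : (span D {c} * I).FG := (Submodule.fg_span_singleton c).mul hIfg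
    have := h _ hJ0 hJfg hle
    unfold IsStarInvertible at this ⊢
    rwa [smul_mul_one_div hc0 I] at this
  · intro h I hI hIfg _
    exact h I hI hIfg

theorem pmd_inv (s : SemistarOp D K) (h : IsPMD s.star) :
    ∀ E : Submodule D K, E ≠ ⊥ → E.FG → s.star (E * (1 / E)) = s.star 1 := by
  intro E hE hEfg
  have hfd := (pmd_iff_finStarDomain s).mp h E hE hEfg
  unfold IsStarInvertible at hfd
  have h1E : (1 / E : Submodule D K) ≠ ⊥ := one_div_ne_bot hEfg
  calc s.star (E * (1 / E)) = s.star (finStar s.star (E * (1 / E))) :=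
        (star_finStar s (mul_ne_bot hE h1E)).symm
    _ = s.star (finStar s.star 1) := by rw [hfd]
    _ = s.star 1 := star_finStar s one_ne_bot

end Main
theorem statement5 {D K : Type*} [CommRing D] [IsDomain D] [Field K] [Algebra D K]
    [IsFractionRing D K] (s : SemistarOp D K) :
    ((IsStarDomain s.star ↔
        (IsAB s.star ∧ ∀ F : Submodule D K, F ≠ ⊥ → F.FG → ∀ E : Submodule D K, E ≠ ⊥ →
          s.star (E * (1 / F)) = s.star E / F)) ∧
      (IsStarDomain s.star ↔
        (IsQuasiStarIntegrallyClosed s.star ∧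
          ∀ F : Submodule D K, F ≠ ⊥ → F.FG → ∀ E : Submodule D K, E ≠ ⊥ →
            s.star (E * (1 / F)) = s.star E / F))) ∧
    ((IsPStarMD s ↔
        (IsAB s.star ∧ ∀ F : Submodule D K, F ≠ ⊥ → F.FG → ∀ E : Submodule D K, E ≠ ⊥ →
          finStar s.star (E * (1 / F)) = finStar s.star E / F)) ∧
      (IsPStarMD s ↔
        (IsQuasiStarIntegrallyClosed s.star ∧
          ∀ F : Submodule D K, F ≠ ⊥ → F.FG → ∀ E : Submodule D K, E ≠ ⊥ →
            finStar s.star (E * (1 / F)) = finStar s.star E / F))) := by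
  have hab1 : IsStarDomain s.star → IsAB s.star :=
    fun h => ab_of_inv s fun E hE hfg => h E hE hfg
  have hab2 : IsPStarMD s → IsAB s.star := fun h => ab_of_inv s (pmd_inv s h)
  refine ⟨⟨⟨fun h => ⟨hab1 h, starDomain_formula s h⟩,
      fun h => starDomain_of_formula s h.2⟩,
    ⟨fun h => ⟨qic_of_ab s (hab1 h), starDomain_formula s h⟩,
      fun h => starDomain_of_formula s h.2⟩⟩,
    ⟨⟨fun h => ⟨hab2 h, starDomain_formula (SemistarOp.fin s) ((pmd_iff_finStarDomain s).mp h)⟩,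
      fun h => (pmd_iff_finStarDomain s).mpr (starDomain_of_formula (SemistarOp.fin s) h.2)⟩,
    ⟨fun h => ⟨qic_of_ab s (hab2 h),
        starDomain_formula (SemistarOp.fin s) ((pmd_iff_finStarDomain s).mp h)⟩,
      fun h => (pmd_iff_finStarDomain s).mpr (starDomain_of_formula (SemistarOp.fin s) h.2)⟩⟩⟩

end Semistar
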